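/- Every linear operator J on the space of polynomials over ℂ that does not increase degree (deg J(p) ≤ deg p for all nonzero p) can be written uniquely in the form J = Σ_{ν≥0} (a_ν(x)/ν!) D^ν with polynomials a_ν satisfying deg a_ν ≤ ν. -/

import Mathlib

open Polynomial

noncomputable def aC (J : Polynomial ℂ →ₗ[ℂ] Polynomial ℂ) : ℕ → Polynomial ℂ
  | n => J (X ^ n) - ∑ ν ∈ (Finset.range n).attach,
      aC J ν * Polynomial.hasseDeriv (ν : ℕ) (X ^ n)
decreasing_by exact Finset.mem_range.mp ν.2

lemma aC_def (J : Polynomial ℂ →ₗ[ℂ] Polynomial ℂ) (n : ℕ) :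
    aC J n = J (X ^ n) - ∑ ν ∈ Finset.range n,
      aC J ν * Polynomial.hasseDeriv ν (X ^ n) := by
  rw [aC, ← Finset.sum_attach (Finset.range n)
    (fun ν => aC J ν * Polynomial.hasseDeriv ν (X ^ n))]

lemma hasse_X_pow_self (n : ℕ) : Polynomial.hasseDeriv n ((X : Polynomial ℂ) ^ n) = 1 := by
  rw [Polynomial.X_pow_eq_monomial, Polynomial.hasseDeriv_monomial]
  simp

lemma deg_aC (J : Polynomial ℂ →ₗ[ℂ] Polynomial ℂ)
    (hJ : ∀ p : Polynomial ℂ, (J p).degree ≤ p.degree) :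
    ∀ n, (aC J n).degree ≤ (n : ℕ) := by
  intro n
  induction n using Nat.strong_induction_on with
  | _ n ih =>
    rw [aC_def]
    refine le_trans (Polynomial.degree_sub_le _ _) (max_le ?_ ?_)
    · exact le_trans (hJ _) (Polynomial.degree_X_pow n).le
    · refine le_trans (Polynomial.degree_sum_le _ _) (Finset.sup_le ?_)
      intro ν hν
      have hν' := Finset.mem_range.mp hν
      refine le_trans (Polynomial.degree_mul_le _ _) ?_
      have h1 : (Polynomial.hasseDeriv ν ((X : Polynomial ℂ) ^ n)).degree ≤ ((n - ν : ℕ) : WithBot ℕ) := by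
        rw [Polynomial.X_pow_eq_monomial, Polynomial.hasseDeriv_monomial]
        exact Polynomial.degree_monomial_le _ _
      refine le_trans (add_le_add (ih ν hν') h1) ?_
      rw [← Nat.cast_add, Nat.cast_le]
      omega

lemma J_X_pow (J : Polynomial ℂ →ₗ[ℂ] Polynomial ℂ) (n : ℕ) :
    J (X ^ n) = ∑ ν ∈ Finset.range (n + 1),
      aC J ν * Polynomial.hasseDeriv ν (X ^ n) := by
  rw [Finset.sum_range_succ, aC_def, hasse_X_pow_self, mul_one]
  ring

lemma J_eq (J : Polynomial ℂ →ₗ[ℂ] Polynomial ℂ) (d : ℕ) (p : Polynomial ℂ)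
    (hp : p.natDegree < d + 1) :
    J p = ∑ ν ∈ Finset.range (d + 1), aC J ν * Polynomial.hasseDeriv ν p := by
  conv_lhs => rw [p.as_sum_range' (d + 1) hp]
  rw [map_sum]
  conv_rhs => rw [p.as_sum_range' (d + 1) hp]
  simp_rw [map_sum, Finset.mul_sum]
  rw [Finset.sum_comm]
  refine Finset.sum_congr rfl fun n hn => ?_
  have hmc : (Polynomial.monomial n (p.coeff n) : Polynomial ℂ) = p.coeff n • X ^ n := by
    rw [Polynomial.X_pow_eq_monomial, Polynomial.smul_monomial, smul_eq_mul, mul_one]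
  rw [hmc, map_smul, J_X_pow, Finset.smul_sum]
  have hsub : Finset.range (n + 1) ⊆ Finset.range (d + 1) :=
    Finset.range_subset_range.mpr (by have := Finset.mem_range.mp hn; omega)
  rw [Finset.sum_subset hsub]
  · refine Finset.sum_congr rfl fun ν hν => ?_
    rw [map_smul, mul_smul_comm]
  · intro ν hν hν'
    have : Polynomial.hasseDeriv ν ((X : Polynomial ℂ) ^ n) = 0 := by
      refine Polynomial.hasseDeriv_eq_zero_of_lt_natDegree _ _ ?_
      rw [Polynomial.natDegree_X_pow]
      simp only [Finset.mem_range] at hν'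
      omega
    rw [this]
    simp

lemma conv_term (ν : ℕ) (a p : Polynomial ℂ) :
    ((Nat.factorial ν : ℂ))⁻¹ • (a * Polynomial.derivative^[ν] p)
      = a * Polynomial.hasseDeriv ν p := by
  have h : Polynomial.derivative^[ν] p = ν.factorial • Polynomial.hasseDeriv ν p := by
    rw [← Polynomial.factorial_smul_hasseDeriv]
    simp
  rw [h, mul_smul_comm, ← Nat.cast_smul_eq_nsmul ℂ, inv_smul_smul₀
    (by exact_mod_cast ν.factorial_ne_zero)]

theorem stmt4 (J : Polynomial ℂ →ₗ[ℂ] Polynomial ℂ)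
    (hJ : ∀ p : Polynomial ℂ, (J p).degree ≤ p.degree) :
    ∃! a : ℕ → Polynomial ℂ, (∀ ν, (a ν).degree ≤ (ν : ℕ)) ∧
      ∀ p, J p = ∑ ν ∈ Finset.range (p.natDegree + 1),
        ((Nat.factorial ν : ℂ))⁻¹ • (a ν * Polynomial.derivative^[ν] p) := by
  refine ⟨aC J, ⟨deg_aC J hJ, fun p => ?_⟩, ?_⟩
  · simp_rw [conv_term]
    exact J_eq J p.natDegree p (Nat.lt_succ_self _)
  · rintro b ⟨hb1, hb2⟩
    funext n
    induction n using Nat.strong_induction_on with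
    | _ n ih =>
      have hx := hb2 (X ^ n)
      simp_rw [conv_term] at hx
      rw [Polynomial.natDegree_X_pow] at hx
      rw [J_X_pow J n] at hx
      rw [Finset.sum_range_succ, Finset.sum_range_succ, hasse_X_pow_self, mul_one, mul_one] at hx
      have hsums : ∑ ν ∈ Finset.range n, b ν * Polynomial.hasseDeriv ν (X ^ n)
          = ∑ ν ∈ Finset.range n, aC J ν * Polynomial.hasseDeriv ν (X ^ n) := by
        refine Finset.sum_congr rfl fun ν hν => ?_
        rw [ih ν (Finset.mem_range.mp hν)]
      rw [hsums] at hx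
      exact (add_left_cancel hx).symm
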